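/- On a probability space, fix s, V ∈ ℝ^q, m ∈ ℝ^q and set h := m − s. Let X be a random vector with E[X] = m and E[‖X − m‖²] ≤ σ², and set Δ := X − s − V. Let Q be a random vector such that, conditionally on X, E[Q | X] = Δ and E[‖Q − Δ‖² | X] ≤ ω_p‖Δ‖² for some ω_p ≥ 0. For α ∈ [0,1] set V' := V + α Q. Then E[‖V' − h‖²] ≤ (1 − α)‖V − h‖² + α σ² + α(α(1 + ω_p) − 1)·E[‖Δ‖²]. -/

import Mathlib

open MeasureTheory ProbabilityTheory

section aux
variable {Ω : Type*} {m m0 : MeasurableSpace Ω} {μ : Measure Ω}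

lemma integrable_inner_of_memL2 {E : Type*} [NormedAddCommGroup E] [InnerProductSpace ℝ E]
    {f g : Ω → E} (hf : MemLp f 2 μ) (hg : MemLp g 2 μ) :
    Integrable (fun a => (inner ℝ (f a) (g a) : ℝ)) μ := by
  have h := L2.integrable_inner (𝕜 := ℝ) (hf.toLp f) (hg.toLp g)
  refine h.congr ?_
  filter_upwards [hf.coeFn_toLp, hg.coeFn_toLp] with a ha hb
  rw [ha, hb]

lemma condexp_clm {E F : Type*} [NormedAddCommGroup E] [NormedSpace ℝ E] [CompleteSpace E]
    [NormedAddCommGroup F] [NormedSpace ℝ F] [CompleteSpace F]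
    (hm : m ≤ m0) [IsFiniteMeasure μ] (T : E →L[ℝ] F) {f : Ω → E} (hf : Integrable f μ) :
    (μ[fun a => T (f a) | m]) =ᵐ[μ] fun a => T ((μ[f|m]) a) := by
  refine (ae_eq_condExp_of_forall_setIntegral_eq hm (T.integrable_comp hf)
    (fun s _ _ => (T.integrable_comp integrable_condExp).integrableOn)
    (fun s hs hμs => ?_)
    ((T.continuous.comp_stronglyMeasurable stronglyMeasurable_condExp).aestronglyMeasurable)).symm
  rw [T.integral_comp_comm integrable_condExp.integrableOn,
    T.integral_comp_comm hf.integrableOn, setIntegral_condExp hm hf hs]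

end aux

/-- One-step control-variate recursion at a single agent. `V` is the
current control variate, `X` a stochastic oracle of the mean statistic `m` (with variance
at most `σ²`), `Δ := X − s − V` the corrected innovation, `Q` an unbiased compression of
`Δ` (conditionally on `X`) with relative variance `ω_p`, and `V' := V + α Q` with
`α ∈ [0,1]`. Then `E[‖V' − h‖²] ≤ (1−α)‖V − h‖² + ασ² + α(α(1+ω_p) − 1) E[‖Δ‖²]`,
where `h := m − s`. -/
theorem control_variate_one_step
    {q : ℕ} {Ω : Type*} [MeasurableSpace Ω] (Pr : Measure Ω) [IsProbabilityMeasure Pr]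
    (s V m : EuclideanSpace ℝ (Fin q))
    (σ ωp α : ℝ) (hσ : 0 ≤ σ) (hωp : 0 ≤ ωp) (hα0 : 0 ≤ α) (hα1 : α ≤ 1)
    (X Q : Ω → EuclideanSpace ℝ (Fin q))
    (hX_meas : Measurable X) (hQ_meas : Measurable Q)
    (hX_int : Integrable X Pr)
    (hX_sq_int : Integrable (fun a => ‖X a - m‖ ^ 2) Pr)
    (hX_mean : ∫ a, X a ∂Pr = m)
    (hX_var : ∫ a, ‖X a - m‖ ^ 2 ∂Pr ≤ σ ^ 2)
    (hQ_int : Integrable Q Pr)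
    (hQ_sq_int : Integrable (fun a => ‖Q a‖ ^ 2) Pr)
    -- conditionally on X, Q is an unbiased compression of Δ := X − s − V
    -- with relative variance ω_p
    (hQ_mean : Pr[Q | MeasurableSpace.comap X inferInstance]
        =ᵐ[Pr] fun a => X a - s - V)
    (hQ_var : ∀ᵐ a ∂Pr,
      (Pr[fun a' => ‖Q a' - (X a' - s - V)‖ ^ 2 | MeasurableSpace.comap X inferInstance]) a
        ≤ ωp * ‖X a - s - V‖ ^ 2) :
    ∫ a, ‖(V + α • Q a) - (m - s)‖ ^ 2 ∂Pr
      ≤ (1 - α) * ‖V - (m - s)‖ ^ 2 + α * σ ^ 2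
        + α * (α * (1 + ωp) - 1) * ∫ a, ‖X a - s - V‖ ^ 2 ∂Pr := by
  have hm : MeasurableSpace.comap X inferInstance ≤ ‹MeasurableSpace Ω› := hX_meas.comap_le
  set 𝔪 : MeasurableSpace Ω := MeasurableSpace.comap X inferInstance with h𝔪
  -- abbreviations (as plain functions, kept syntactically explicit)
  have hXm' : Measurable[𝔪] X := fun t ht => ⟨t, ht, rfl⟩
  have hD_meas : Measurable[𝔪] (fun a => X a - s - V) :=
    (hXm'.sub measurable_const).sub measurable_const
  have hD_sm : StronglyMeasurable[𝔪] (fun a => X a - s - V) := hD_meas.stronglyMeasurable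
  have hD_int : Integrable (fun a => X a - s - V) Pr :=
    (hX_int.sub (integrable_const s)).sub (integrable_const V)
  have hG_int : Integrable (fun a => Q a - (X a - s - V)) Pr := hQ_int.sub hD_int
  -- Memℒp facts
  have hXm2 : MemLp (fun a => X a - m) 2 Pr :=
    (memLp_two_iff_integrable_sq_norm
      (hX_meas.aestronglyMeasurable.sub aestronglyMeasurable_const)).2 hX_sq_int
  have hD2 : MemLp (fun a => X a - s - V) 2 Pr := by
    have he : (fun a => X a - s - V) = fun a => (X a - m) + (m - s - V) := by
      funext a; module
    rw [he]; exact hXm2.add (memLp_const _)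
  have hQ2 : MemLp Q 2 Pr :=
    (memLp_two_iff_integrable_sq_norm hQ_meas.aestronglyMeasurable).2 hQ_sq_int
  have hG2 : MemLp (fun a => Q a - (X a - s - V)) 2 Pr := hQ2.sub hD2
  have hf2 : MemLp (fun a => (V - (m - s)) + α • (X a - s - V)) 2 Pr :=
    (memLp_const (V - (m - s))).add (hD2.const_smul α)
  have hDsq_int : Integrable (fun a => ‖X a - s - V‖ ^ 2) Pr :=
    (memLp_two_iff_integrable_sq_norm hD2.aestronglyMeasurable).1 hD2
  have hGsq_int : Integrable (fun a => ‖Q a - (X a - s - V)‖ ^ 2) Pr :=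
    (memLp_two_iff_integrable_sq_norm hG2.aestronglyMeasurable).1 hG2
  -- conditional mean of the compression error is zero
  have hG0 : (Pr[fun a => Q a - (X a - s - V) | 𝔪]) =ᵐ[Pr] 0 := by
    have hDce : (Pr[fun a => X a - s - V | 𝔪]) = fun a => X a - s - V :=
      condExp_of_stronglyMeasurable (μ := Pr) hm hD_sm hD_int
    have h1 : (Pr[fun a => Q a - (X a - s - V) | 𝔪]) =ᵐ[Pr]
        Pr[Q | 𝔪] - Pr[fun a => X a - s - V | 𝔪] :=
      condExp_sub hQ_int hD_int 𝔪
    filter_upwards [h1, hQ_mean] with a ha hb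
    rw [ha, Pi.sub_apply, hb, hDce, Pi.zero_apply, sub_self]
  -- cross term vanishes
  have hfg_int : Integrable
      (fun a => (inner ℝ ((V - (m - s)) + α • (X a - s - V)) (Q a - (X a - s - V)) : ℝ)) Pr :=
    integrable_inner_of_memL2 hf2 hG2
  have hf_sm : StronglyMeasurable[𝔪] (fun a => (V - (m - s)) + α • (X a - s - V)) :=
    stronglyMeasurable_const.add (hD_sm.const_smul α)
  have hcross : ∫ a,
      (inner ℝ ((V - (m - s)) + α • (X a - s - V)) (Q a - (X a - s - V)) : ℝ) ∂Pr = 0 := by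
    have hinner : ∀ a, (inner ℝ ((V - (m - s)) + α • (X a - s - V)) (Q a - (X a - s - V)) : ℝ)
        = ∑ i : Fin q, ((V - (m - s)) + α • (X a - s - V)) i * (Q a - (X a - s - V)) i := by
      intro a
      simp [PiLp.inner_apply, RCLike.inner_apply, mul_comm]
    have hfi2 : ∀ i : Fin q,
        MemLp (fun a => ((V - (m - s)) + α • (X a - s - V)) i) 2 Pr := fun i => by
      exact (EuclideanSpace.proj (𝕜 := ℝ) i).comp_memLp' hf2
    have hGi2 : ∀ i : Fin q, MemLp (fun a => (Q a - (X a - s - V)) i) 2 Pr := fun i => by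
      exact (EuclideanSpace.proj (𝕜 := ℝ) i).comp_memLp' hG2
    have hfgi : ∀ i : Fin q, Integrable
        (fun a => ((V - (m - s)) + α • (X a - s - V)) i * (Q a - (X a - s - V)) i) Pr := by
      intro i
      have := integrable_inner_of_memL2 (hfi2 i) (hGi2 i)
      simpa [RCLike.inner_apply, mul_comm] using this
    simp only [hinner]
    rw [integral_finset_sum _ fun i _ => hfgi i]
    refine Finset.sum_eq_zero fun i _ => ?_
    have hfi_sm : StronglyMeasurable[𝔪]
        (fun a => ((V - (m - s)) + α • (X a - s - V)) i) := by
      simpa using (EuclideanSpace.proj (𝕜 := ℝ) i).continuous.comp_stronglyMeasurable hf_sm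
    have hGi_int : Integrable (fun a => (Q a - (X a - s - V)) i) Pr := by
      simpa [Function.comp] using
        (EuclideanSpace.proj (𝕜 := ℝ) i).integrable_comp hG_int
    have hGi0 : (Pr[fun a => (Q a - (X a - s - V)) i | 𝔪]) =ᵐ[Pr] 0 := by
      have h1 := condexp_clm hm (EuclideanSpace.proj (𝕜 := ℝ) i) hG_int
      simp only [EuclideanSpace.proj, PiLp.proj_apply] at h1
      refine h1.trans ?_
      filter_upwards [hG0] with a ha
      rw [ha]; simp
    have hpull := condExp_mul_of_stronglyMeasurable_left (μ := Pr) hfi_sm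
      (show Integrable ((fun a => ((V - (m - s)) + α • (X a - s - V)) i)
        * fun a => (Q a - (X a - s - V)) i) Pr from hfgi i) hGi_int
    have hzero : (Pr[(fun a => ((V - (m - s)) + α • (X a - s - V)) i)
        * (fun a => (Q a - (X a - s - V)) i) | 𝔪]) =ᵐ[Pr] 0 := by
      refine hpull.trans ?_
      filter_upwards [hGi0] with a ha
      simp only [Pi.mul_apply, ha, Pi.zero_apply, mul_zero]
    calc ∫ a, ((V - (m - s)) + α • (X a - s - V)) i * (Q a - (X a - s - V)) i ∂Pr
        = ∫ a, (Pr[(fun a => ((V - (m - s)) + α • (X a - s - V)) i)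
            * (fun a => (Q a - (X a - s - V)) i) | 𝔪]) a ∂Pr :=
          (integral_condExp hm).symm
      _ = ∫ a, (0 : Ω → ℝ) a ∂Pr := integral_congr_ae hzero
      _ = 0 := by simp
  -- variance bound for the compression error
  have hGvar : ∫ a, ‖Q a - (X a - s - V)‖ ^ 2 ∂Pr ≤ ωp * ∫ a, ‖X a - s - V‖ ^ 2 ∂Pr := by
    calc ∫ a, ‖Q a - (X a - s - V)‖ ^ 2 ∂Pr
        = ∫ a, (Pr[fun a' => ‖Q a' - (X a' - s - V)‖ ^ 2 | 𝔪]) a ∂Pr :=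
          (integral_condExp hm).symm
      _ ≤ ∫ a, ωp * ‖X a - s - V‖ ^ 2 ∂Pr :=
          integral_mono_ae integrable_condExp (hDsq_int.const_mul ωp) hQ_var
      _ = ωp * ∫ a, ‖X a - s - V‖ ^ 2 ∂Pr := integral_const_mul _ _
  -- pointwise algebraic identity
  have key : ∀ a, ‖(V + α • Q a) - (m - s)‖ ^ 2
      = (1 - α) * ‖V - (m - s)‖ ^ 2 + α * ‖X a - m‖ ^ 2
        - α * (1 - α) * ‖X a - s - V‖ ^ 2
        + 2 * α * (inner ℝ ((V - (m - s)) + α • (X a - s - V)) (Q a - (X a - s - V)) : ℝ)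
        + α ^ 2 * ‖Q a - (X a - s - V)‖ ^ 2 := by
    intro a
    rw [show (V + α • Q a) - (m - s)
        = ((V - (m - s)) + α • (X a - s - V)) + α • (Q a - (X a - s - V)) by module,
      show X a - m = (X a - s - V) + (V - (m - s)) by module]
    rw [norm_add_sq_real, norm_add_sq_real, norm_add_sq_real, real_inner_smul_right,
      real_inner_smul_right, norm_smul, norm_smul]
    rw [real_inner_comm (X a - s - V) (V - (m - s))]
    simp only [Real.norm_eq_abs, mul_pow, sq_abs]
    ring
  -- combine
  have iA : Integrable (fun _ : Ω => (1 - α) * ‖V - (m - s)‖ ^ 2) Pr := integrable_const _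
  have iB := hX_sq_int.const_mul α
  have iC := hDsq_int.const_mul (α * (1 - α))
  have iD := hfg_int.const_mul (2 * α)
  have iE := hGsq_int.const_mul (α ^ 2)
  have hsplit : ∫ a, ‖(V + α • Q a) - (m - s)‖ ^ 2 ∂Pr
      = (1 - α) * ‖V - (m - s)‖ ^ 2 + α * ∫ a, ‖X a - m‖ ^ 2 ∂Pr
        - α * (1 - α) * ∫ a, ‖X a - s - V‖ ^ 2 ∂Pr
        + 2 * α * ∫ a,
            (inner ℝ ((V - (m - s)) + α • (X a - s - V)) (Q a - (X a - s - V)) : ℝ) ∂Pr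
        + α ^ 2 * ∫ a, ‖Q a - (X a - s - V)‖ ^ 2 ∂Pr := by
    have i1 : Integrable (fun a => (1 - α) * ‖V - (m - s)‖ ^ 2 + α * ‖X a - m‖ ^ 2) Pr :=
      iA.add iB
    have i2 : Integrable (fun a => (1 - α) * ‖V - (m - s)‖ ^ 2 + α * ‖X a - m‖ ^ 2
        - α * (1 - α) * ‖X a - s - V‖ ^ 2) Pr := i1.sub iC
    have i3 : Integrable (fun a => (1 - α) * ‖V - (m - s)‖ ^ 2 + α * ‖X a - m‖ ^ 2
        - α * (1 - α) * ‖X a - s - V‖ ^ 2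
        + 2 * α * (inner ℝ ((V - (m - s)) + α • (X a - s - V)) (Q a - (X a - s - V)) : ℝ)) Pr :=
      i2.add iD
    simp only [key]
    rw [integral_add i3 iE, integral_add i2 iD, integral_sub i1 iC,
      integral_add iA iB, integral_const, integral_const_mul, integral_const_mul,
      integral_const_mul, integral_const_mul]
    simp [measure_univ]
  rw [hsplit, hcross]
  have h1 : α * ∫ a, ‖X a - m‖ ^ 2 ∂Pr ≤ α * σ ^ 2 :=
    mul_le_mul_of_nonneg_left hX_var hα0
  have h2 : α ^ 2 * ∫ a, ‖Q a - (X a - s - V)‖ ^ 2 ∂Pr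
      ≤ α ^ 2 * (ωp * ∫ a, ‖X a - s - V‖ ^ 2 ∂Pr) :=
    mul_le_mul_of_nonneg_left hGvar (sq_nonneg α)
  nlinarith [h1, h2]
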